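/- Let Ξ be a finite abelian group in which every element satisfies x + x = 0, and let q : Ξ → ZMod 2 satisfy q(0) = 0 and be such that B(x,y) := q(x+y) + q(x) + q(y) is biadditive and perfect (the map Ξ → (Ξ →+ ZMod 2), x ↦ B x, is bijective). Let G := Σ_{x ∈ Ξ} ε(q(x)) ∈ ℤ, where ε : ZMod 2 → ℤ sends 0 to 1 and 1 to −1 (G is the Gauss sum whose sign is the Arf invariant of q). Then G > 0 if and only if there exists a subgroup L ≤ Ξ which is Lagrangian for B (L = {x ∈ Ξ | ∀ l ∈ L, B x l = 0}) and on which q vanishes identically. -/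

import Mathlib

/-- For a `ZMod 2`-valued quadratic refinement `q` of a perfect biadditive pairing `B` on a finite
abelian 2-torsion group, the Gauss sum `∑ x, ε (q x)` is positive if and only if there is a
Lagrangian subgroup of `B` on which `q` vanishes identically. -/
theorem stmt5 {Ξ : Type*} [AddCommGroup Ξ] [Fintype Ξ]
    (h2 : ∀ x : Ξ, x + x = 0)
    (q : Ξ → ZMod 2) (hq0 : q 0 = 0)
    (B : Ξ →+ Ξ →+ ZMod 2)
    (hBdef : ∀ x y : Ξ, B x y = q (x + y) + q x + q y)
    (hperf : Function.Bijective ⇑B) :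
    0 < (∑ x : Ξ, if q x = 0 then (1 : ℤ) else -1) ↔
      ∃ L : AddSubgroup Ξ, (∀ x : Ξ, x ∈ L ↔ ∀ l ∈ L, B x l = 0) ∧ (∀ l ∈ L, q l = 0) := by
  classical
  set e : ZMod 2 → ℤ := fun a => if a = 0 then 1 else -1 with he
  have he_add : ∀ a b : ZMod 2, e (a + b) = e a * e b := by decide
  have he0 : e 0 = 1 := by decide
  have he1 : e 1 = -1 := by decide
  have hGrw : (∑ x : Ξ, if q x = 0 then (1 : ℤ) else -1) = ∑ x : Ξ, e (q x) := rfl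
  have hsymm : ∀ x y : Ξ, B x y = B y x := by
    intro x y
    have hA := hBdef x y
    have hC := hBdef y x
    rw [add_comm y x] at hC
    rw [hA, hC]; ring
  have hqadd : ∀ x y : Ξ, q (x + y) = q x + q y + B x y := by
    intro x y
    rw [hBdef]
    generalize q (x + y) = a
    generalize q x = b
    generalize q y = c
    revert a b c; decide
  -- the key Gauss-sum identity for any subgroup on which q vanishes
  have key : ∀ L : AddSubgroup Ξ, (∀ l ∈ L, q l = 0) →
      (∑ x : Ξ, e (q x)) = ∑ x : Ξ, if (∀ l ∈ L, B x l = 0) then e (q x) else 0 := by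
    intro L hL
    have hcard : ((Fintype.card L : ℤ) ≠ 0) := by
      exact_mod_cast (Fintype.card_pos (α := L)).ne'
    have charsum : ∀ x : Ξ, (∑ l : L, e (B x l)) =
        if (∀ l ∈ L, B x l = 0) then (Fintype.card L : ℤ) else 0 := by
      intro x
      split_ifs with h
      · rw [Finset.sum_congr rfl (fun l _ => by rw [h l l.2, he0])]
        simp
      · push_neg at h
        obtain ⟨l₀, hl₀, hne⟩ := h
        have h1 : B x l₀ = 1 := by revert hne; generalize B x l₀ = a; revert a; decide
        have hrev := Equiv.sum_comp (Equiv.addRight (⟨l₀, hl₀⟩ : L)) (fun l : L => e (B x ↑l))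
        simp only [Equiv.coe_addRight] at hrev
        have hstep : ∀ l : L, e (B x ↑(l + (⟨l₀, hl₀⟩ : L))) = - e (B x ↑l) := by
          intro l
          have hc : ((l + (⟨l₀, hl₀⟩ : L) : L) : Ξ) = ↑l + l₀ := rfl
          rw [hc, map_add, he_add, h1, he1]; ring
        rw [Finset.sum_congr rfl (fun l _ => hstep l)] at hrev
        rw [Finset.sum_neg_distrib] at hrev
        linarith
    apply mul_left_cancel₀ hcard
    calc (Fintype.card L : ℤ) * ∑ x : Ξ, e (q x)
        = ∑ _l : L, ∑ x : Ξ, e (q x) := by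
          rw [Finset.sum_const, Finset.card_univ, nsmul_eq_mul]
      _ = ∑ l : L, ∑ x : Ξ, e (q (x + ↑l)) := by
          refine Finset.sum_congr rfl fun l _ => ?_
          exact (Equiv.sum_comp (Equiv.addRight (l : Ξ)) (fun x => e (q x))).symm
      _ = ∑ x : Ξ, ∑ l : L, e (q x) * e (B x ↑l) := by
          rw [Finset.sum_comm]
          refine Finset.sum_congr rfl fun x _ => Finset.sum_congr rfl fun l _ => ?_
          rw [hqadd x ↑l, hL ↑l l.2, add_zero, he_add]
      _ = ∑ x : Ξ, e (q x) * (if (∀ l ∈ L, B x l = 0) then (Fintype.card L : ℤ) else 0) := by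
          refine Finset.sum_congr rfl fun x _ => ?_
          rw [← Finset.mul_sum, charsum x]
      _ = (Fintype.card L : ℤ) * ∑ x : Ξ, if (∀ l ∈ L, B x l = 0) then e (q x) else 0 := by
          rw [Finset.mul_sum]
          refine Finset.sum_congr rfl fun x _ => ?_
          split_ifs <;> ring
  have count : ∀ (p : Ξ → Prop) (_ : DecidablePred p) (c : ℤ),
      (∑ x : Ξ, if p x then c else 0) = c * (Fintype.card {x // p x}) := by
    intro p hp c
    rw [← Finset.sum_filter, Finset.sum_const, Fintype.card_subtype, nsmul_eq_mul]
    ring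
  constructor
  · -- forward direction: positive Gauss sum gives a Lagrangian
    intro hG
    -- choose a maximal subgroup on which q vanishes
    haveI : Finite (AddSubgroup Ξ) :=
      Finite.of_injective (fun L : AddSubgroup Ξ => (L : Set Ξ)) SetLike.coe_injective
    obtain ⟨L, hLq, hmax⟩ := Set.Finite.exists_maximalFor id
      {L : AddSubgroup Ξ | ∀ l ∈ L, q l = 0} (Set.toFinite _)
      ⟨⊥, by intro l hl; rw [AddSubgroup.mem_bot] at hl; rw [hl, hq0]⟩
    simp only [id] at hmax
    have hfwd : ∀ z ∈ L, ∀ l ∈ L, B z l = 0 := by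
      intro z hz l hl
      rw [hBdef, hLq _ (L.add_mem hz hl), hLq _ hz, hLq _ hl]
      simp
    -- every element of the perp outside L has q = 1, by maximality
    have hall : ∀ y : Ξ, (∀ l ∈ L, B y l = 0) → y ∉ L → q y = 1 := by
      intro y hy hyL
      by_contra hqy
      have hqy0 : q y = 0 := by revert hqy; generalize q y = a; revert a; decide
      let L' : AddSubgroup Ξ :=
        { carrier := {z | z ∈ L ∨ z + y ∈ L}
          zero_mem' := Or.inl L.zero_mem
          add_mem' := by
            rintro a b (ha | ha) (hb | hb)
            · exact Or.inl (L.add_mem ha hb)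
            · refine Or.inr ?_
              have h : a + b + y = a + (b + y) := by abel
              rw [h]; exact L.add_mem ha hb
            · refine Or.inr ?_
              have h : a + b + y = (a + y) + b := by abel
              rw [h]; exact L.add_mem ha hb
            · refine Or.inl ?_
              have h : a + b = (a + y) + (b + y) := by
                have h' : (a + y) + (b + y) = a + b + (y + y) := by abel
                rw [h', h2 y, add_zero]
              rw [h]; exact L.add_mem ha hb
          neg_mem' := by
            intro a ha
            have hna : -a = a := neg_eq_of_add_eq_zero_left (h2 a)
            rw [hna]; exact ha }
      have hq' : ∀ l ∈ L', q l = 0 := by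
        intro z hz
        have hz' : z ∈ L ∨ z + y ∈ L := hz
        rcases hz' with hz' | hz'
        · exact hLq z hz'
        · have hz2 : z = (z + y) + y := by rw [add_assoc, h2, add_zero]
          rw [hz2, hqadd, hLq _ hz', hqy0, hsymm, hy _ hz']
          simp
      have hle : L ≤ L' := fun z hz => show z ∈ L ∨ z + y ∈ L from Or.inl hz
      have heq : L = L' := le_antisymm hle (hmax hq' hle)
      have hyL' : y ∈ L' := show y ∈ L ∨ y + y ∈ L from Or.inr (by rw [h2 y]; exact L.zero_mem)
      rw [← heq] at hyL'
      exact hyL hyL'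
    refine ⟨L, fun x => ⟨fun hx => hfwd x hx, fun hx => ?_⟩, hLq⟩
    by_contra hxL
    -- the perp subgroup
    let P : AddSubgroup Ξ :=
      { carrier := {z | ∀ l ∈ L, B z l = 0}
        zero_mem' := by intro l _; simp
        add_mem' := by
          intro a b ha hb l hl
          rw [map_add, AddMonoidHom.add_apply, ha l hl, hb l hl, add_zero]
        neg_mem' := by
          intro a ha l hl
          have hna : -a = a := neg_eq_of_add_eq_zero_left (h2 a)
          rw [hna]; exact ha l hl }
    have hLP : L ≤ P := fun z hz => hfwd z hz
    have hxP : x ∈ P := hx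
    have hLneP : L ≠ P := fun h => hxL (h ▸ hxP)
    -- compute the Gauss sum
    rw [hGrw, key L hLq] at hG
    have hsum : (∑ z : Ξ, if (∀ l ∈ L, B z l = 0) then e (q z) else 0)
        = (∑ z : Ξ, if z ∈ L then (2 : ℤ) else 0) - (∑ z : Ξ, if z ∈ P then (1 : ℤ) else 0) := by
      rw [← Finset.sum_sub_distrib]
      refine Finset.sum_congr rfl fun z _ => ?_
      by_cases hzL : z ∈ L
      · rw [if_pos (hfwd z hzL), if_pos hzL, if_pos (show z ∈ P from hfwd z hzL),
          hLq z hzL, he0]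
        norm_num
      · by_cases hzP : ∀ l ∈ L, B z l = 0
        · rw [if_pos hzP, if_neg hzL, if_pos (show z ∈ P from hzP), hall z hzP hzL, he1]
          norm_num
        · rw [if_neg hzP, if_neg hzL, if_neg (show ¬ z ∈ P from hzP)]
          norm_num
    rw [hsum, count _ _ _, count _ _ _] at hG
    -- card comparison
    have hdvd : Nat.card L ∣ Nat.card P := AddSubgroup.card_dvd_of_le hLP
    obtain ⟨k, hk⟩ := hdvd
    have hPpos : 0 < Nat.card P := Nat.card_pos
    have hLpos : 0 < Nat.card L := Nat.card_pos
    have hk1 : k ≠ 1 := by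
      intro hk1
      rw [hk1, mul_one] at hk
      apply hLneP
      apply SetLike.coe_injective
      refine Set.eq_of_subset_of_ncard_le hLP ?_ (Set.toFinite _)
      rw [← Nat.card_coe_set_eq, ← Nat.card_coe_set_eq, SetLike.coe_sort_coe, SetLike.coe_sort_coe]
      exact le_of_eq hk
    have hk0 : k ≠ 0 := by
      intro hk0; rw [hk0, mul_zero] at hk; omega
    have hge : 2 * Nat.card L ≤ Nat.card P := by
      rw [hk]
      have : 2 ≤ k := by omega
      nlinarith
    have hcL : Fintype.card {x // x ∈ L} = Nat.card L := (Nat.card_eq_fintype_card).symm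
    have hcP : Fintype.card {x // x ∈ P} = Nat.card P := (Nat.card_eq_fintype_card).symm
    rw [hcL, hcP] at hG
    have : ((2 : ℤ) * Nat.card L ≤ (Nat.card P : ℤ)) := by exact_mod_cast hge
    linarith
  · rintro ⟨L, hLag, hLq⟩
    rw [hGrw, key L hLq]
    have hpt : ∀ x : Ξ, (if (∀ l ∈ L, B x l = 0) then e (q x) else 0)
        = if x ∈ L then (1 : ℤ) else 0 := by
      intro x
      by_cases hx : x ∈ L
      · rw [if_pos ((hLag x).mp hx), if_pos hx, hLq x hx, he0]
      · rw [if_neg (fun h => hx ((hLag x).mpr h)), if_neg hx]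
    rw [Finset.sum_congr rfl (fun x _ => hpt x), count _ _ _]
    have : 0 < Fintype.card {x // x ∈ L} := Fintype.card_pos
    positivity
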